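/- For all k, m ∈ ℕ there exists N₀ ∈ ℕ such that for every n ≥ N₀, the number of sets S ⊆ {1,…,2n} satisfying the ballot condition with |S| = n−k and maj(S) = n² − k² − m equals p(m) − p(m − (2k+1)), where p(j) denotes the number of partitions of j (with p(j) = 0 for j < 0). In other words, the number of two-row standard Young tableaux of shape (n+k, n−k) whose major index equals n² − k² − m stabilizes for large n to p(m) − p(m − (2k+1)). -/

import Mathlib

/-- The ballot condition: `S ⊆ {1,…,N}` encodes the second row of a standard
Young tableau with at most two rows and `N` cells iff
`2·|S ∩ {1,…,m}| ≤ m` for every `m ∈ {1,…,N}`. -/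
def IsBallot (N : ℕ) (S : Finset ℕ) : Prop :=
  S ⊆ Finset.Icc 1 N ∧ ∀ m ∈ Finset.Icc 1 N, 2 * (S ∩ Finset.Icc 1 m).card ≤ m

/-- The descent set `des(S) = {i ∈ {1,…,N−1} : i ∉ S and i+1 ∈ S}`. -/
def desSet (N : ℕ) (S : Finset ℕ) : Finset ℕ :=
  (Finset.Icc 1 (N - 1)).filter fun i => i ∉ S ∧ i + 1 ∈ S

/-- The major index `maj(S) = Σ_{i ∈ des(S)} i`. -/
def maj (N : ℕ) (S : Finset ℕ) : ℕ := ∑ i ∈ desSet N S, i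

open scoped Classical

def box : ℕ → ℕ → ℤ → ℕ
  | 0, _, j => if j = 0 then 1 else 0
  | _+1, 0, j => if j = 0 then 1 else 0
  | a+1, b+1, j => if j < 0 then 0 else box (a+1) b j + box a (b+1) (j - (b+1))
  termination_by a b _ => (a, b)

lemma box_neg : ∀ (a b : ℕ) (j : ℤ), j < 0 → box a b j = 0
  | 0, _, j, h => by rw [box]; simp [show j ≠ 0 by omega]
  | _+1, 0, j, h => by rw [box]; simp [show j ≠ 0 by omega]
  | a+1, b+1, j, h => by rw [box]; simp [h]

lemma box_zero_left (b : ℕ) (j : ℤ) : box 0 b j = if j = 0 then 1 else 0 := by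
  rw [box]

lemma box_zero_right : ∀ (a : ℕ) (j : ℤ), box a 0 j = if j = 0 then 1 else 0
  | 0, j => by rw [box]
  | a+1, j => by rw [box]

lemma P1 (a b : ℕ) (j : ℤ) :
    box (a+1) (b+1) j = box (a+1) b j + box a (b+1) (j - (b+1)) := by
  rw [box]
  by_cases h : j < 0
  · rw [if_pos h, box_neg _ _ _ h, box_neg _ _ _ (by push_cast; omega)]
  · rw [if_neg h]

lemma box_zero : ∀ (a b : ℕ), box a b 0 = 1
  | 0, _ => by rw [box]; simp
  | _+1, 0 => by rw [box]; simp
  | a+1, b+1 => by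
      have h1 := P1 a b (0:ℤ)
      have h2 : box a (b+1) ((0:ℤ) - ((b:ℤ)+1)) = 0 := box_neg _ _ _ (by omega)
      have h3 := box_zero (a+1) b
      push_cast at *
      omega
  termination_by a b => (a, b)

lemma box_one_right : ∀ (a : ℕ) (j : ℤ), box a 1 j = if 0 ≤ j ∧ j ≤ a then 1 else 0
  | 0, j => by rw [box_zero_left]; split_ifs <;> omega
  | a+1, j => by
      have h := P1 a 0 j
      norm_num at h
      rw [h, box_zero_right, box_one_right a (j-1)]
      push_cast
      split_ifs <;> omega

lemma box_one_left : ∀ (b : ℕ) (j : ℤ), box 1 b j = if 0 ≤ j ∧ j ≤ b then 1 else 0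
  | 0, j => by rw [box_zero_right]; split_ifs <;> omega
  | b+1, j => by
      rw [P1, box_zero_left, box_one_left b j]
      push_cast
      split_ifs <;> omega

lemma P2 : ∀ (a b : ℕ) (j : ℤ),
    box (a+1) (b+1) j = box a (b+1) j + box (a+1) b (j - (a+1))
  | a, 0, j => by
      rw [box_one_right, box_one_right, box_zero_right]
      push_cast
      split_ifs <;> omega
  | 0, b+1, j => by
      rw [box_one_left, box_one_left, box_zero_left]
      push_cast
      split_ifs <;> omega
  | a+1, b+1, j => by
      have h1 := P1 (a+1) (b+1) j
      have h2 := P2 (a+1) b j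
      have h3 := P2 a (b+1) (j - ((b:ℤ)+1+1))
      have h4 := P1 a (b+1) j
      have h5 := P1 (a+1) b (j - ((a:ℤ)+1+1))
      push_cast at *
      have e1 : j - ((b:ℤ)+1+1) - (a+1) = j - (a+1+1) - (b+1) := by ring
      rw [e1] at h3
      omega
  termination_by a b _ => (a, b)

lemma box_symm : ∀ (a b : ℕ) (j : ℤ), box a b j = box b a j
  | 0, b, j => by rw [box_zero_left, box_zero_right]
  | a+1, 0, j => by rw [box_zero_left, box_zero_right]
  | a+1, b+1, j => by
      rw [P1, box_symm (a+1) b j, box_symm a (b+1) (j - ((b:ℤ)+1)), ← P2 b a j]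
  termination_by a b _ => (a, b)

lemma box_cap : ∀ (a b : ℕ) (j : ℤ), (a:ℤ) * b < j → box a b j = 0
  | 0, b, j, h => by rw [box_zero_left]; simp at h ⊢; omega
  | a+1, 0, j, h => by rw [box_zero_right]; simp at h ⊢; omega
  | a+1, b+1, j, h => by
      push_cast at h
      rw [P1, box_cap (a+1) b j (by push_cast; nlinarith),
        box_cap a (b+1) (j - ((b:ℤ)+1)) (by push_cast; nlinarith)]
  termination_by a b _ => (a, b)

lemma L5 (a b : ℕ) (j : ℤ) :
    box a (b+1) j + box (a+1) b (j - (a+1)) = box (a+1) b j + box a (b+1) (j - (b+1)) := by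
  have h1 := P1 a b j
  have h2 := P2 a b j
  omega

lemma boxid (e f : ℕ) (d : ℤ) :
    box (e+2) (f+1) d + box e (f+1) (d - ((f:ℤ) - e))
      + box e (f+2) (d - ((f:ℤ)+1) - ((f:ℤ) - e + 1))
      + box (e+1) f (d - ((f:ℤ)+1) - ((e:ℤ)+1))
    = box (e+1) (f+2) (d - ((f:ℤ) - e)) + box (e+2) f (d - ((e:ℤ)+2)) + box (e+1) f d
      + box e (f+1) (d - 2*((f:ℤ)+1)) := by
  have h1 := P2 (e+1) f d
  have h2 := P1 e (f+1) (d - ((f:ℤ) - e))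
  have h3 := P1 e f d
  have h4 := P2 e f (d - ((f:ℤ) - e))
  have h5 := L5 e f (d - ((f:ℤ)+1))
  push_cast at *
  ring_nf at h1 h2 h3 h4 h5 ⊢
  omega
open scoped Classical

lemma multiset_card_le_sum (s : Multiset ℕ) (h : ∀ x ∈ s, 1 ≤ x) : Multiset.card s ≤ s.sum := by
  induction s using Multiset.induction_on with
  | empty => simp
  | cons a s ih =>
      simp only [Multiset.card_cons, Multiset.sum_cons]
      have ha : 1 ≤ a := h a (Multiset.mem_cons_self a s)
      have := ih fun x hx => h x (Multiset.mem_cons_of_mem hx)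
      omega

lemma partition_zero_parts (p : Nat.Partition 0) : p.parts = 0 := by
  apply Multiset.eq_zero_of_forall_notMem
  intro x hx
  have h1 := p.parts_pos hx
  have h2 : x ≤ p.parts.sum := Multiset.single_le_sum (fun _ _ => Nat.zero_le _) x hx
  rw [p.parts_sum] at h2
  omega

lemma card_partition_zero : Fintype.card (Nat.Partition 0) = 1 := by
  rw [Fintype.card_eq_one_iff]
  refine ⟨⟨0, by simp, by simp⟩, fun p => ?_⟩
  exact Nat.Partition.ext (partition_zero_parts p)

lemma parts_eq_zero_of_card_zero {j : ℕ} (p : Nat.Partition j) (h : Multiset.card p.parts = 0) :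
    j = 0 := by
  have h0 : p.parts = 0 := Multiset.card_eq_zero.mp h
  have := p.parts_sum
  rw [h0] at this
  simpa using this.symm

lemma box_interp : ∀ (a b : ℕ) (j : ℕ),
    box a b (j:ℤ) = ((Finset.univ : Finset (Nat.Partition j)).filter
      (fun p => Multiset.card p.parts ≤ a ∧ ∀ x ∈ p.parts, x ≤ b)).card
  | 0, b, j => by
      rw [box_zero_left]
      rcases Nat.eq_zero_or_pos j with rfl | hj
      · rw [if_pos (by norm_num), Finset.filter_true_of_mem, Finset.card_univ,
          card_partition_zero]
        intro p _
        rw [partition_zero_parts p]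
        simp
      · rw [if_neg (by exact_mod_cast hj.ne'), eq_comm, Finset.card_eq_zero,
          Finset.filter_eq_empty_iff]
        intro p _
        simp only [not_and]
        intro hcard
        have := parts_eq_zero_of_card_zero p (Nat.le_zero.mp hcard)
        omega
  | a+1, 0, j => by
      rw [box_zero_right]
      rcases Nat.eq_zero_or_pos j with rfl | hj
      · rw [if_pos (by norm_num), Finset.filter_true_of_mem, Finset.card_univ,
          card_partition_zero]
        intro p _
        rw [partition_zero_parts p]
        simp
      · rw [if_neg (by exact_mod_cast hj.ne'), eq_comm, Finset.card_eq_zero,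
          Finset.filter_eq_empty_iff]
        intro p _
        simp only [not_and]
        intro _ hle
        have h0 : p.parts = 0 := by
          apply Multiset.eq_zero_of_forall_notMem
          intro x hx
          have := p.parts_pos hx
          have := hle x hx
          omega
        have := p.parts_sum
        rw [h0] at this
        simp at this
        omega
  | a+1, b+1, j => by
      rw [P1]
      have hsplit := Finset.card_filter_add_card_filter_not
        (s := (Finset.univ : Finset (Nat.Partition j)).filter
          (fun p => Multiset.card p.parts ≤ a+1 ∧ ∀ x ∈ p.parts, x ≤ b+1))
        (p := fun p => (b+1) ∈ p.parts)
      rw [Finset.filter_filter, Finset.filter_filter] at hsplit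
      -- first piece: b+1 not a part
      have hfirst : ((Finset.univ : Finset (Nat.Partition j)).filter
          (fun p => (Multiset.card p.parts ≤ a+1 ∧ ∀ x ∈ p.parts, x ≤ b+1)
            ∧ ¬ (b+1) ∈ p.parts)).card = box (a+1) b (j:ℤ) := by
        rw [box_interp (a+1) b j]
        congr 1
        apply Finset.filter_congr
        intro p _
        constructor
        · rintro ⟨⟨h1, h2⟩, h3⟩
          refine ⟨h1, fun x hx => ?_⟩
          have := h2 x hx
          have : x ≠ b+1 := fun he => h3 (he ▸ hx)
          omega
        · rintro ⟨h1, h2⟩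
          refine ⟨⟨h1, fun x hx => le_trans (h2 x hx) (by omega)⟩, fun hmem => ?_⟩
          have := h2 _ hmem
          omega
      -- second piece: b+1 is a part
      have hsecond : ((Finset.univ : Finset (Nat.Partition j)).filter
          (fun p => (Multiset.card p.parts ≤ a+1 ∧ ∀ x ∈ p.parts, x ≤ b+1)
            ∧ (b+1) ∈ p.parts)).card = box a (b+1) ((j:ℤ) - (b+1)) := by
        rcases lt_or_ge j (b+1) with hlt | hle
        · rw [box_neg _ _ _ (by push_cast; omega), Finset.card_eq_zero,
            Finset.filter_eq_empty_iff]
          intro p _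
          simp only [not_and]
          intro _ hmem
          exfalso
          have : (b+1) ≤ p.parts.sum :=
            Multiset.single_le_sum (fun _ _ => Nat.zero_le _) _ hmem
          rw [p.parts_sum] at this
          omega
        · obtain ⟨j₀, rfl⟩ : ∃ j₀, j = j₀ + (b+1) := ⟨j - (b+1), by omega⟩
          have hcast : ((j₀ + (b+1) : ℕ) : ℤ) - ((b:ℤ)+1) = (j₀ : ℤ) := by push_cast; ring
          rw [hcast, box_interp a (b+1) j₀]
          apply Finset.card_bij'
            (i := fun p hp => (⟨p.parts.erase (b+1),
              fun {x} hx => p.parts_pos (Multiset.mem_of_mem_erase hx),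
              by
                have hmem : (b+1) ∈ p.parts := (Finset.mem_filter.mp hp).2.2
                have := Multiset.cons_erase hmem
                have hsum := p.parts_sum
                rw [← this, Multiset.sum_cons] at hsum
                omega⟩ : Nat.Partition j₀))
            (j := fun q hq => (⟨(b+1) ::ₘ q.parts,
              fun {x} hx => by
                rcases Multiset.mem_cons.mp hx with rfl | hx'
                · omega
                · exact q.parts_pos hx',
              by rw [Multiset.sum_cons, q.parts_sum]; omega⟩ : Nat.Partition (j₀ + (b+1))))
          case hi =>
            intro p hp
            simp only [Finset.mem_filter, Finset.mem_univ, true_and] at hp ⊢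
            obtain ⟨⟨h1, h2⟩, h3⟩ := hp
            constructor
            · have hce := Multiset.card_erase_of_mem h3
              rw [hce, Nat.pred_eq_sub_one]
              have : 1 ≤ Multiset.card p.parts := by
                rw [Nat.one_le_iff_ne_zero]
                intro h0
                rw [Multiset.card_eq_zero.mp h0] at h3
                simp at h3
              omega
            · intro x hx
              exact h2 x (Multiset.mem_of_mem_erase hx)
          case hj =>
            intro q hq
            simp only [Finset.mem_filter, Finset.mem_univ, true_and] at hq ⊢
            obtain ⟨h1, h2⟩ := hq
            refine ⟨⟨?_, ?_⟩, ?_⟩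
            · simp only [Multiset.card_cons]
              omega
            · intro x hx
              rcases Multiset.mem_cons.mp hx with rfl | hx'
              · omega
              · exact h2 x hx'
            · exact Multiset.mem_cons_self _ _
          case left_inv =>
            intro p hp
            apply Nat.Partition.ext
            simp only
            exact Multiset.cons_erase (Finset.mem_filter.mp hp).2.2
          case right_inv =>
            intro q hq
            apply Nat.Partition.ext
            simp only
            exact Multiset.erase_cons_head _ _
      omega
  termination_by a b _ => (a, b)

lemma box_full (a b j : ℕ) (ha : j ≤ a) (hb : j ≤ b) :
    box a b (j:ℤ) = Fintype.card (Nat.Partition j) := by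
  rw [box_interp, Finset.filter_true_of_mem, Finset.card_univ]
  intro p _
  have hcs : Multiset.card p.parts ≤ j := by
    have := multiset_card_le_sum p.parts (fun x hx => p.parts_pos hx)
    rw [p.parts_sum] at this
    exact this
  refine ⟨le_trans hcs ha, fun x hx => ?_⟩
  have : x ≤ p.parts.sum := Multiset.single_le_sum (fun _ _ => Nat.zero_le _) x hx
  rw [p.parts_sum] at this
  omega
noncomputable def bset (N c M : ℕ) : Finset (Finset ℕ) :=
  (Finset.Icc 1 N).powerset.filter fun S => IsBallot N S ∧ S.card = c ∧ maj N S = M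

noncomputable def TT (N c M : ℕ) : ℕ := (bset N c M).card

lemma mem_bset {N c M : ℕ} {S : Finset ℕ} :
    S ∈ bset N c M ↔ IsBallot N S ∧ S.card = c ∧ maj N S = M := by
  simp only [bset, Finset.mem_filter, Finset.mem_powerset]
  exact ⟨fun h => h.2, fun h => ⟨h.1.1, h⟩⟩

lemma desSet_mem {N : ℕ} {S : Finset ℕ} {i : ℕ} :
    i ∈ desSet N S ↔ (1 ≤ i ∧ i ≤ N - 1) ∧ i ∉ S ∧ i + 1 ∈ S := by
  simp [desSet, Finset.mem_filter, Finset.mem_Icc]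

lemma ballot_empty (N : ℕ) : IsBallot N ∅ := by
  refine ⟨Finset.empty_subset _, fun m hm => ?_⟩
  simp only [Finset.empty_inter, Finset.card_empty, Nat.mul_zero]
  omega

lemma maj_empty (N : ℕ) : maj N ∅ = 0 := by
  have : desSet N ∅ = ∅ := by
    ext i
    simp [desSet_mem]
  simp [maj, this]

lemma TT_czero (N M : ℕ) : TT N 0 M = if M = 0 then 1 else 0 := by
  have hb : bset N 0 M = if M = 0 then {∅} else ∅ := by
    split_ifs with h
    · ext S
      simp only [mem_bset, Finset.mem_singleton, Finset.card_eq_zero]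
      constructor
      · rintro ⟨_, rfl, _⟩; rfl
      · rintro rfl
        exact ⟨ballot_empty N, rfl, by rw [maj_empty]; omega⟩
    · ext S
      simp only [mem_bset, Finset.notMem_empty, iff_false, not_and, Finset.card_eq_zero]
      rintro _ rfl
      rw [maj_empty]
      omega
  rw [TT, hb]
  split_ifs <;> simp

lemma TT_R0 {N c : ℕ} (h : N < 2*c) (M : ℕ) : TT N c M = 0 := by
  rw [TT, bset, Finset.card_eq_zero, Finset.filter_eq_empty_iff]
  rintro S hS ⟨hb, hc, _⟩
  rcases Nat.eq_zero_or_pos N with rfl | hN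
  · have : S = ∅ := by
      have := hb.1
      simpa [Finset.subset_empty] using this
    subst this
    simp at hc
    omega
  · have h2 := hb.2 N (by simp [Finset.mem_Icc]; omega)
    rw [Finset.inter_eq_left.mpr hb.1] at h2
    omega

lemma nocons_sum_le (N : ℕ) : ∀ (A : Finset ℕ),
    (∀ i ∈ A, 1 ≤ i ∧ i + 1 ≤ N) → (∀ i ∈ A, i + 1 ∉ A) →
    (∑ i ∈ A, i) + A.card * A.card ≤ A.card * N := by
  induction N using Nat.strong_induction_on with
  | _ N ih =>
    intro A h1 h2
    rcases A.eq_empty_or_nonempty with rfl | hne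
    · simp
    · set M₀ := A.max' hne with hM₀def
      have hM₀ : M₀ ∈ A := A.max'_mem hne
      have hub : ∀ i ∈ A, i ≤ M₀ := fun i hi => A.le_max' i hi
      have hM1 := h1 _ hM₀
      obtain ⟨N', rfl⟩ : ∃ N', N = N' + 2 := ⟨N - 2, by omega⟩
      have hsub : ∀ i ∈ A.erase M₀, 1 ≤ i ∧ i + 1 ≤ N' := by
        intro i hi
        have hiA := Finset.mem_of_mem_erase hi
        have hne' := Finset.ne_of_mem_erase hi
        have h3 : i ≤ M₀ := hub _ hiA
        have h4 : i + 1 ≠ M₀ := fun he => h2 i hiA (he ▸ hM₀)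
        have h5 := h1 i hiA
        omega
      have hsub2 : ∀ i ∈ A.erase M₀, i + 1 ∉ A.erase M₀ := fun i hi h =>
        h2 i (Finset.mem_of_mem_erase hi) (Finset.mem_of_mem_erase h)
      have IH := ih N' (by omega) (A.erase M₀) hsub hsub2
      have hsum : (∑ i ∈ A.erase M₀, i) + M₀ = ∑ i ∈ A, i :=
        Finset.sum_erase_add A _ hM₀
      have hcard : A.card = (A.erase M₀).card + 1 := by
        rw [Finset.card_erase_of_mem hM₀]
        have : 1 ≤ A.card := Finset.card_pos.mpr hne
        omega
      set r := (A.erase M₀).card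
      rw [hcard, ← hsum]
      nlinarith [IH, hM1.2]

lemma maj_le {N c : ℕ} {S : Finset ℕ} (hS : S ⊆ Finset.Icc 1 N) (hc : S.card = c)
    (h2c : 2*c ≤ N) : maj N S ≤ c * (N - c) := by
  set A := desSet N S with hA
  have h1 : ∀ i ∈ A, 1 ≤ i ∧ i + 1 ≤ N := by
    intro i hi
    rw [hA, desSet_mem] at hi
    omega
  have h2 : ∀ i ∈ A, i + 1 ∉ A := by
    intro i hi hcon
    rw [hA, desSet_mem] at hi hcon
    exact hcon.2.1 hi.2.2
  have hr : A.card ≤ c := by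
    have himg : A.image (· + 1) ⊆ S := by
      intro x hx
      obtain ⟨i, hi, rfl⟩ := Finset.mem_image.mp hx
      rw [hA, desSet_mem] at hi
      exact hi.2.2
    calc A.card = (A.image (· + 1)).card :=
          (Finset.card_image_of_injective _ (add_left_injective 1)).symm
      _ ≤ S.card := Finset.card_le_card himg
      _ = c := hc
  have hmain := nocons_sum_le N A h1 h2
  have hmaj : maj N S = ∑ i ∈ A, i := rfl
  have hcN : c ≤ N := by omega
  zify [hcN]
  zify at hmain
  have k1 : (A.card : ℤ) ≤ c := by exact_mod_cast hr
  have k2 : (c : ℤ) + c ≤ N := by push_cast; omega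
  have hmaj' : (maj N S : ℤ) = ∑ i ∈ A, (i : ℤ) := by
    rw [hmaj]; push_cast; rfl
  nlinarith [mul_nonneg (sub_nonneg.mpr k1)
    (show (0:ℤ) ≤ (N:ℤ) - c - A.card by linarith)]

lemma TT_R1 {N c M : ℕ} (h2c : 2*c ≤ N) (hM : c * (N - c) < M) : TT N c M = 0 := by
  rw [TT, bset, Finset.card_eq_zero, Finset.filter_eq_empty_iff]
  rintro S hS ⟨hb, hc, hm⟩
  have := maj_le hb.1 hc h2c
  omega

lemma ballot_succ {S : Finset ℕ} {N : ℕ} (hS : S ⊆ Finset.Icc 1 N) :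
    IsBallot (N+1) S ↔ IsBallot N S := by
  constructor
  · rintro ⟨_, hb⟩
    refine ⟨hS, fun m hm => hb m ?_⟩
    simp only [Finset.mem_Icc] at hm ⊢
    omega
  · rintro ⟨_, hb⟩
    refine ⟨hS.trans (Finset.Icc_subset_Icc_right (by omega)), fun m hm => ?_⟩
    simp only [Finset.mem_Icc] at hm
    by_cases hmN : m ≤ N
    · exact hb m (by simp only [Finset.mem_Icc]; omega)
    · have hm1 : S ∩ Finset.Icc 1 m = S :=
        Finset.inter_eq_left.mpr (hS.trans (Finset.Icc_subset_Icc_right (by omega)))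
      rw [hm1]
      rcases Nat.eq_zero_or_pos N with rfl | hN
      · have : S = ∅ := by simpa [Finset.subset_empty] using hS
        subst this
        simp
      · have h2 := hb N (by simp only [Finset.mem_Icc]; omega)
        rw [Finset.inter_eq_left.mpr hS] at h2
        omega

lemma desSet_not_top {N : ℕ} {S : Finset ℕ} (h : (N+1) ∉ S) :
    desSet (N+1) S = desSet N S := by
  ext i
  simp only [desSet_mem, Nat.add_sub_cancel]
  constructor
  · rintro ⟨⟨ha, hb⟩, hc, hd⟩
    have hiN : i ≠ N := fun he => h (he ▸ hd)
    exact ⟨⟨ha, by omega⟩, hc, hd⟩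
  · rintro ⟨⟨ha, hb⟩, hc, hd⟩
    exact ⟨⟨ha, by omega⟩, hc, hd⟩

lemma bset_filter_not_top (N c M : ℕ) :
    (bset (N+1) c M).filter (fun S => (N+1) ∉ S) = bset N c M := by
  ext S
  simp only [Finset.mem_filter, mem_bset]
  constructor
  · rintro ⟨⟨hb, hc, hm⟩, hnot⟩
    have hS1 : S ⊆ Finset.Icc 1 N := by
      intro x hx
      have h1 := hb.1 hx
      simp only [Finset.mem_Icc] at h1 ⊢
      have : x ≠ N+1 := fun he => hnot (he ▸ hx)
      omega
    refine ⟨(ballot_succ hS1).mp hb, hc, ?_⟩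
    rw [maj, desSet_not_top hnot] at hm
    exact hm
  · rintro ⟨hb, hc, hm⟩
    have hS1 := hb.1
    have hnot : (N+1) ∉ S := fun h => by
      have := hS1 h
      simp only [Finset.mem_Icc] at this
      omega
    refine ⟨⟨(ballot_succ hS1).mpr hb, hc, ?_⟩, hnot⟩
    rw [maj, desSet_not_top hnot]
    exact hm

lemma desSet_top {N : ℕ} {S : Finset ℕ} (hN : 1 ≤ N) (hmem : (N+1) ∈ S) :
    desSet (N+1) S = if N ∈ S then desSet N (S.erase (N+1))
      else insert N (desSet N (S.erase (N+1))) := by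
  split_ifs with h
  · ext i
    simp only [desSet_mem, Nat.add_sub_cancel, Finset.mem_erase]
    constructor
    · rintro ⟨⟨ha, hb⟩, hc, hd⟩
      have hiN : i ≠ N := fun he => hc (he ▸ h)
      refine ⟨⟨ha, by omega⟩, fun hcon => hc hcon.2, ⟨by omega, hd⟩⟩
    · rintro ⟨⟨ha, hb⟩, hc, hd⟩
      refine ⟨⟨ha, by omega⟩, fun hcon => hc ⟨by omega, hcon⟩, hd.2⟩
  · ext i
    simp only [desSet_mem, Nat.add_sub_cancel, Finset.mem_insert, Finset.mem_erase]
    constructor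
    · rintro ⟨⟨ha, hb⟩, hc, hd⟩
      by_cases hiN : i = N
      · exact Or.inl hiN
      · exact Or.inr ⟨⟨ha, by omega⟩, fun hcon => hc hcon.2, ⟨by omega, hd⟩⟩
    · rintro (rfl | ⟨⟨ha, hb⟩, hc, hd⟩)
      · exact ⟨⟨hN, le_refl _⟩, h, hmem⟩
      · exact ⟨⟨ha, by omega⟩, fun hcon => hc ⟨by omega, hcon⟩, hd.2⟩

lemma maj_top {N : ℕ} {S : Finset ℕ} (hN : 1 ≤ N) (hmem : (N+1) ∈ S) :
    maj (N+1) S = maj N (S.erase (N+1)) + (if N ∈ S then 0 else N) := by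
  rw [maj, desSet_top hN hmem]
  split_ifs with h
  · rw [maj]
    omega
  · have hnotin : N ∉ desSet N (S.erase (N+1)) := by
      rw [desSet_mem]
      rintro ⟨⟨_, hb⟩, _, _⟩
      omega
    rw [Finset.sum_insert hnotin, maj]
    omega

noncomputable def rset (N c M : ℕ) : Finset (Finset ℕ) :=
  (Finset.Icc 1 N).powerset.filter fun S' =>
    IsBallot N S' ∧ S'.card = c ∧ maj N S' + (if N ∈ S' then 0 else N) = M

lemma mem_rset {N c M : ℕ} {S : Finset ℕ} :
    S ∈ rset N c M ↔ IsBallot N S ∧ S.card = c ∧ maj N S + (if N ∈ S then 0 else N) = M := by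
  simp only [rset, Finset.mem_filter, Finset.mem_powerset]
  exact ⟨fun h => h.2, fun h => ⟨h.1.1, h⟩⟩

lemma card_top (N c M : ℕ) (hN : 1 ≤ N) (h2c : 2*(c+1) ≤ N+1) :
    ((bset (N+1) (c+1) M).filter (fun S => (N+1) ∈ S)).card = (rset N c M).card := by
  apply Finset.card_bij' (i := fun S _ => S.erase (N+1)) (j := fun S' _ => insert (N+1) S')
  case hi =>
    intro S hS
    obtain ⟨⟨hb, hc, hm⟩, hmem⟩ := Finset.mem_filter.mp hS |>.imp_left (fun h => mem_bset.mp h)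
    rw [mem_rset]
    have hsub : S.erase (N+1) ⊆ Finset.Icc 1 N := by
      intro x hx
      obtain ⟨hne, hxS⟩ := Finset.mem_erase.mp hx
      have := hb.1 hxS
      simp only [Finset.mem_Icc] at this ⊢
      omega
    have hballot : IsBallot N (S.erase (N+1)) := by
      refine ⟨hsub, fun m hm' => ?_⟩
      simp only [Finset.mem_Icc] at hm'
      have hint : (S.erase (N+1)) ∩ Finset.Icc 1 m = S ∩ Finset.Icc 1 m := by
        ext x
        simp only [Finset.mem_inter, Finset.mem_erase, Finset.mem_Icc]
        constructor
        · rintro ⟨⟨_, h1⟩, h2⟩; exact ⟨h1, h2⟩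
        · rintro ⟨h1, h2⟩; exact ⟨⟨by omega, h1⟩, h2⟩
      rw [hint]
      exact hb.2 m (by simp only [Finset.mem_Icc]; omega)
    refine ⟨hballot, ?_, ?_⟩
    · rw [Finset.card_erase_of_mem hmem, hc]
      rfl
    · have hmt := maj_top hN hmem
      rw [hmt] at hm
      have hNiff : N ∈ S ↔ N ∈ S.erase (N+1) := by
        simp only [Finset.mem_erase]
        constructor
        · intro h; exact ⟨by omega, h⟩
        · intro h; exact h.2
      by_cases hNS : N ∈ S
      · rw [if_pos hNS] at hm
        rw [if_pos (hNiff.mp hNS)]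
        omega
      · rw [if_neg hNS] at hm
        rw [if_neg (fun h => hNS (hNiff.mpr h))]
        omega
  case hj =>
    intro S' hS'
    obtain ⟨hb, hc, hm⟩ := mem_rset.mp hS'
    have hS'sub := hb.1
    have hnot : (N+1) ∉ S' := fun h => by
      have := hS'sub h
      simp only [Finset.mem_Icc] at this
      omega
    rw [Finset.mem_filter]
    constructor
    · rw [mem_bset]
      have hsub : insert (N+1) S' ⊆ Finset.Icc 1 (N+1) := by
        intro x hx
        rcases Finset.mem_insert.mp hx with rfl | hx'
        · simp only [Finset.mem_Icc]; omega
        · have := hS'sub hx'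
          simp only [Finset.mem_Icc] at this ⊢
          omega
      have hballot : IsBallot (N+1) (insert (N+1) S') := by
        refine ⟨hsub, fun m hm' => ?_⟩
        simp only [Finset.mem_Icc] at hm'
        by_cases hmN : m ≤ N
        · have hint : (insert (N+1) S') ∩ Finset.Icc 1 m = S' ∩ Finset.Icc 1 m := by
            ext x
            simp only [Finset.mem_inter, Finset.mem_insert, Finset.mem_Icc]
            constructor
            · rintro ⟨rfl | h1, h2⟩
              · omega
              · exact ⟨h1, h2⟩
            · rintro ⟨h1, h2⟩; exact ⟨Or.inr h1, h2⟩
          rw [hint]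
          exact hb.2 m (by simp only [Finset.mem_Icc]; omega)
        · have hmeq : m = N+1 := by omega
          subst hmeq
          have hint : (insert (N+1) S') ∩ Finset.Icc 1 (N+1) = insert (N+1) S' :=
            Finset.inter_eq_left.mpr hsub
          rw [hint, Finset.card_insert_of_notMem hnot, hc]
          omega
      refine ⟨hballot, ?_, ?_⟩
      · rw [Finset.card_insert_of_notMem hnot, hc]
      · have hmt := maj_top hN (Finset.mem_insert_self (N+1) S')
        rw [Finset.erase_insert hnot] at hmt
        rw [hmt]
        have hNiff : N ∈ insert (N+1) S' ↔ N ∈ S' := by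
          simp only [Finset.mem_insert]
          constructor
          · rintro (he | h)
            · omega
            · exact h
          · exact fun h => Or.inr h
        by_cases hNS : N ∈ S'
        · rw [if_pos (hNiff.mpr hNS)]
          rw [if_pos hNS] at hm
          omega
        · rw [if_neg (fun h => hNS (hNiff.mp h))]
          rw [if_neg hNS] at hm
          omega
    · exact Finset.mem_insert_self _ _
  case left_inv =>
    intro S hS
    exact Finset.insert_erase ((Finset.mem_filter.mp hS).2)
  case right_inv =>
    intro S' hS'
    apply Finset.erase_insert
    intro h
    have := (mem_rset.mp hS').1.1 h
    simp only [Finset.mem_Icc] at this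
    omega

lemma TT_rec (n c M : ℕ) (h2c : 2*(c+1) ≤ n+2) :
    TT (n+2) (c+1) M + TT n c M
      = TT (n+1) (c+1) M + TT (n+1) c M + (if n+1 ≤ M then TT n c (M - (n+1)) else 0) := by
  have hsplit := Finset.card_filter_add_card_filter_not
    (s := bset (n+2) (c+1) M) (p := fun S => (n+2) ∈ S)
  have h0 : (bset (n+2) (c+1) M).filter (fun S => ¬ (n+2) ∈ S) = bset (n+1) (c+1) M :=
    bset_filter_not_top (n+1) (c+1) M
  have h1 : ((bset (n+2) (c+1) M).filter (fun S => (n+2) ∈ S)).card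
      = (rset (n+1) c M).card := card_top (n+1) c M (by omega) (by omega)
  have hsplit2 := Finset.card_filter_add_card_filter_not
    (s := rset (n+1) c M) (p := fun S' => (n+1) ∈ S')
  have h2 : (rset (n+1) c M).filter (fun S' => (n+1) ∈ S')
      = (bset (n+1) c M).filter (fun S' => (n+1) ∈ S') := by
    ext S
    simp only [Finset.mem_filter, mem_rset, mem_bset]
    constructor
    · rintro ⟨⟨hb, hc, hm⟩, hmem⟩
      rw [if_pos hmem] at hm
      exact ⟨⟨hb, hc, by omega⟩, hmem⟩
    · rintro ⟨⟨hb, hc, hm⟩, hmem⟩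
      refine ⟨⟨hb, hc, ?_⟩, hmem⟩
      rw [if_pos hmem]
      omega
  have h3 : ((rset (n+1) c M).filter (fun S' => ¬ (n+1) ∈ S')).card
      = if n+1 ≤ M then TT n c (M - (n+1)) else 0 := by
    split_ifs with hM
    · have : (rset (n+1) c M).filter (fun S' => ¬ (n+1) ∈ S')
          = (bset (n+1) c (M - (n+1))).filter (fun S' => ¬ (n+1) ∈ S') := by
        ext S
        simp only [Finset.mem_filter, mem_rset, mem_bset]
        constructor
        · rintro ⟨⟨hb, hc, hm⟩, hmem⟩
          rw [if_neg hmem] at hm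
          exact ⟨⟨hb, hc, by omega⟩, hmem⟩
        · rintro ⟨⟨hb, hc, hm⟩, hmem⟩
          refine ⟨⟨hb, hc, ?_⟩, hmem⟩
          rw [if_neg hmem]
          omega
      rw [this, bset_filter_not_top n c (M - (n+1))]
      rfl
    · rw [Finset.card_eq_zero, Finset.filter_eq_empty_iff]
      rintro S hS hmem
      obtain ⟨hb, hc, hm⟩ := mem_rset.mp hS
      rw [if_neg hmem] at hm
      omega
  have hsplit3 := Finset.card_filter_add_card_filter_not
    (s := bset (n+1) c M) (p := fun S' => (n+1) ∈ S')
  have h5 : (bset (n+1) c M).filter (fun S' => ¬ (n+1) ∈ S') = bset n c M :=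
    bset_filter_not_top n c M
  rw [h0] at hsplit
  rw [h2, h3] at hsplit2
  rw [h5] at hsplit3
  have e1 : TT (n+2) (c+1) M = (bset (n+2) (c+1) M).card := rfl
  have e2 : TT (n+1) (c+1) M = (bset (n+1) (c+1) M).card := rfl
  have e3 : TT (n+1) c M = (bset (n+1) c M).card := rfl
  have e4 : TT n c M = (bset n c M).card := rfl
  omega

set_option maxHeartbeats 1000000 in
lemma master : ∀ N : ℕ, ∀ c M b : ℕ, b + c = N → 2*c ≤ N →
    TT N c M + box (c-1) (b+1) ((c:ℤ)*b - M - ((b:ℤ) - c + 1)) = box c b ((c:ℤ)*b - M) := by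
  intro N
  induction N using Nat.strong_induction_on with
  | _ N ih =>
    intro c M b hb h2c
    match c with
    | 0 =>
      simp only [Nat.cast_zero, zero_mul, zero_sub, sub_zero, Nat.zero_sub]
      have e2 : box 0 (b+1) (-(M:ℤ) - ((b:ℤ) + 1)) = 0 := box_neg _ _ _ (by omega)
      rw [TT_czero, e2, box_zero_left]
      split_ifs <;> omega
    | (c'+1) =>
      have hN2 : 2 ≤ N := by omega
      obtain ⟨n, rfl⟩ : ∃ n, N = n + 2 := ⟨N - 2, by omega⟩
      have hb1 : 1 ≤ b := by omega
      obtain ⟨b', rfl⟩ : ∃ b', b = b' + 1 := ⟨b - 1, by omega⟩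
      have hREC := TT_rec n c' M (by omega)
      match c' with
      | 0 =>
        have hbn : b' = n := by omega
        subst hbn
        simp only [Nat.zero_add, zero_add] at hREC ⊢
        rw [TT_czero b' M, TT_czero (b'+1) M, TT_czero b' (M - (b'+1))] at hREC
        have hE1 : TT (b'+1) 1 M + box 0 (b'+1) ((1:ℤ)*b' - M - ((b':ℤ) - 1 + 1))
            = box 1 b' ((1:ℤ)*b' - M) := by
          rcases Nat.eq_zero_or_pos b' with rfl | hbpos
          · rw [TT_R0 (by omega) M, box_zero_left, box_zero_right]
            split_ifs <;> omega
          · have h := ih (b'+1) (by omega) 1 M b' (by omega) (by omega)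
            norm_num at h ⊢
            exact h
        rw [box_zero_left, box_one_left] at hE1
        rw [box_zero_left, box_one_left]
        split_ifs at * <;> omega
      | (e+1) =>
        simp only [Nat.add_sub_cancel] at *
        have hE2 := ih (n+1) (by omega) (e+1) M (b'+1) (by omega) (by omega)
        have hE3 := ih n (by omega) (e+1) M b' (by omega) (by omega)
        simp only [Nat.add_sub_cancel] at hE2 hE3
        have hID := boxid e b' (((e:ℤ)+2)*((b':ℤ)+1) - M)
        have hn1 : n + 1 = b' + e + 2 := by omega
        by_cases hsp : 2*(e+2) ≤ n+1
        · have hE1 := ih (n+1) (by omega) (e+2) M b' (by omega) hsp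
          rw [show e + 2 - 1 = e + 1 by omega] at hE1
          by_cases hM : n+1 ≤ M
          · rw [if_pos hM] at hREC
            have hE4 := ih n (by omega) (e+1) (M - (n+1)) b' (by omega) (by omega)
            simp only [Nat.add_sub_cancel] at hE4
            have hcast : ((M - (n+1) : ℕ) : ℤ) = (M:ℤ) - ((n:ℤ)+1) := by push_cast; omega
            rw [hcast] at hE4
            have hsub : ((n:ℤ)+1) = (b':ℤ) + e + 2 := by push_cast; omega
            rw [hsub] at hE4
            push_cast at hREC hE1 hE2 hE3 hE4 hID ⊢
            ring_nf at hREC hE1 hE2 hE3 hE4 hID ⊢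
            omega
          · rw [if_neg hM] at hREC
            have cap1 : box (e+1) b' (((e:ℤ)+2)*((b':ℤ)+1) - M) = 0 := by
              apply box_cap
              push_cast
              nlinarith [hn1, hM, Nat.lt_of_not_le hM,
                show (M:ℤ) < (n:ℤ)+1 by exact_mod_cast Nat.lt_of_not_le hM,
                show ((n:ℤ)+1) = (b':ℤ) + e + 2 by push_cast; omega]
            have cap2 : box e (b'+1) (((e:ℤ)+2)*((b':ℤ)+1) - M - ((b':ℤ) - e)) = 0 := by
              apply box_cap
              push_cast
              nlinarith [show (M:ℤ) < (n:ℤ)+1 by exact_mod_cast Nat.lt_of_not_le hM,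
                show ((n:ℤ)+1) = (b':ℤ) + e + 2 by push_cast; omega]
            push_cast at hREC hE1 hE2 hE3 cap1 cap2 hID ⊢
            ring_nf at hREC hE1 hE2 hE3 cap1 cap2 hID ⊢
            omega
        · -- n+2 = 2(e+2), so b' = e+1
          have hT1 : TT (n+1) (e+2) M = 0 := TT_R0 (by omega) M
          have hb'e : b' = e+1 := by omega
          subst hb'e
          have hsym := box_symm (e+1) (e+2) (((e:ℤ)+2)*(((e:ℤ)+1)+1) - M - ((e:ℤ)+2))
          by_cases hM : n+1 ≤ M
          · rw [if_pos hM] at hREC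
            have hE4 := ih n (by omega) (e+1) (M - (n+1)) (e+1) (by omega) (by omega)
            simp only [Nat.add_sub_cancel] at hE4
            have hcast : ((M - (n+1) : ℕ) : ℤ) = (M:ℤ) - ((n:ℤ)+1) := by push_cast; omega
            rw [hcast] at hE4
            have hsub : ((n:ℤ)+1) = ((e:ℤ)+1) + e + 2 := by push_cast; omega
            rw [hsub] at hE4
            push_cast at hREC hT1 hE2 hE3 hE4 hsym hID ⊢
            ring_nf at hREC hT1 hE2 hE3 hE4 hsym hID ⊢
            omega
          · rw [if_neg hM] at hREC
            have cap1 : box (e+1) (e+1) (((e:ℤ)+2)*(((e:ℤ)+1)+1) - M) = 0 := by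
              apply box_cap
              push_cast
              nlinarith [show (M:ℤ) < (n:ℤ)+1 by exact_mod_cast Nat.lt_of_not_le hM,
                show ((n:ℤ)+1) = ((e:ℤ)+1) + e + 2 by push_cast; omega]
            have cap2 : box e (e+2) (((e:ℤ)+2)*(((e:ℤ)+1)+1) - M - (((e:ℤ)+1) - e)) = 0 := by
              apply box_cap
              push_cast
              nlinarith [show (M:ℤ) < (n:ℤ)+1 by exact_mod_cast Nat.lt_of_not_le hM,
                show ((n:ℤ)+1) = ((e:ℤ)+1) + e + 2 by push_cast; omega]
            push_cast at hREC hT1 hE2 hE3 cap1 cap2 hsym hID ⊢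
            ring_nf at hREC hT1 hE2 hE3 cap1 cap2 hsym hID ⊢
            omega


/-- Stabilization of the major-index generating count: for fixed `k, m`, and
all sufficiently large `n`, the number of two-row standard Young tableaux of
shape `(n+k, n−k)` (i.e. ballot sets `S ⊆ {1,…,2n}` with `|S| = n−k`) whose
major index equals `n² − k² − m` is `p(m) − p(m − (2k+1))`, where `p` is the
partition function (with `p(j) = 0` for `j < 0`). -/
theorem maj_count_stabilizes (k m : ℕ) :
    ∃ N₀ : ℕ, ∀ n ≥ N₀,
      (((Finset.Icc 1 (2 * n)).powerset.filter fun S =>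
            IsBallot (2 * n) S ∧ S.card = n - k ∧
              (maj (2 * n) S : ℤ) = (n : ℤ) ^ 2 - (k : ℤ) ^ 2 - (m : ℤ)).card) =
        Fintype.card (Nat.Partition m) -
          (if 2 * k + 1 ≤ m then Fintype.card (Nat.Partition (m - (2 * k + 1))) else 0) := by

  refine ⟨m + k + 2, fun n hn => ?_⟩
  have hkn : k ≤ n := by omega
  have hmc : m + 2 ≤ n - k := by omega
  have hmle : m ≤ (n - k) * (n + k) := by
    calc m ≤ n - k := by omega
      _ = (n - k) * 1 := (Nat.mul_one _).symm
      _ ≤ (n - k) * (n + k) := Nat.mul_le_mul_left _ (by omega)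
  have hMm : ((n - k) * (n + k) - m) + m = (n - k) * (n + k) := by omega
  have hcast_c : (((n - k : ℕ)) : ℤ) = (n : ℤ) - k := Nat.cast_sub hkn
  have hMZ : (((n - k) * (n + k) - m : ℕ) : ℤ) = (n : ℤ)^2 - (k:ℤ)^2 - m := by
    rw [Nat.cast_sub hmle]
    push_cast [Nat.cast_sub hkn]
    ring
  have hset : ((Finset.Icc 1 (2 * n)).powerset.filter fun S =>
        IsBallot (2 * n) S ∧ S.card = n - k ∧
          (maj (2 * n) S : ℤ) = (n : ℤ) ^ 2 - (k : ℤ) ^ 2 - (m : ℤ))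
      = bset (2*n) (n-k) ((n - k) * (n + k) - m) := by
    rw [bset]
    apply Finset.filter_congr
    intro S _
    constructor
    · rintro ⟨h1, h2, h3⟩
      refine ⟨h1, h2, ?_⟩
      have : (maj (2*n) S : ℤ) = (((n - k) * (n + k) - m : ℕ) : ℤ) := by rw [h3, hMZ]
      exact_mod_cast this
    · rintro ⟨h1, h2, h3⟩
      refine ⟨h1, h2, ?_⟩
      rw [h3, hMZ]
  rw [hset]
  have hmaster := master (2*n) (n-k) ((n - k) * (n + k) - m) (n+k) (by omega) (by omega)
  have hprod : (((n-k) * (n+k) : ℕ) : ℤ) = ((n-k : ℕ) : ℤ) * ((n+k : ℕ) : ℤ) := by push_cast; ring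
  have harg2 : ((n-k : ℕ) : ℤ) * ((n+k : ℕ) : ℤ) - (((n - k) * (n + k) - m : ℕ) : ℤ) = (m:ℤ) := by
    have h1 := congrArg (fun x : ℕ => (x : ℤ)) hMm
    push_cast [Nat.cast_sub hkn] at h1 ⊢
    ring_nf at h1 ⊢
    linarith
  have harg1 : ((n-k : ℕ) : ℤ) * ((n+k : ℕ) : ℤ) - (((n - k) * (n + k) - m : ℕ) : ℤ)
      - (((n+k : ℕ) : ℤ) - ((n-k : ℕ) : ℤ) + 1) = (m:ℤ) - (2*(k:ℤ)+1) := by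
    have h2 : ((n+k : ℕ) : ℤ) - ((n-k : ℕ) : ℤ) = 2*(k:ℤ) := by
      rw [hcast_c]; push_cast; ring
    rw [harg2, h2]
  rw [harg1, harg2] at hmaster
  have hfull : box (n-k) (n+k) ((m:ℕ):ℤ) = Fintype.card (Nat.Partition m) :=
    box_full _ _ _ (by omega) (by omega)
  have hTT : TT (2*n) (n-k) ((n - k) * (n + k) - m)
      = (bset (2*n) (n-k) ((n - k) * (n + k) - m)).card := rfl
  by_cases h2k : 2*k+1 ≤ m
  · have hcast2 : ((m - (2*k+1) : ℕ) : ℤ) = (m:ℤ) - (2*(k:ℤ)+1) := by push_cast; omega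
    have hfull2 : box (n-k-1) (n+k+1) (((m - (2*k+1) : ℕ)) : ℤ)
        = Fintype.card (Nat.Partition (m - (2*k+1))) :=
      box_full _ _ _ (by omega) (by omega)
    rw [hcast2] at hfull2
    rw [if_pos h2k]
    omega
  · have hneg : box (n-k-1) (n+k+1) ((m:ℤ) - (2*(k:ℤ)+1)) = 0 :=
      box_neg _ _ _ (by omega)
    rw [if_neg h2k]
    omega
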